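/- Let P be a profile of n voters with single-peaked rankings over axis c_1 ▷ ... ▷ c_m, and let r↑ = (c_1 ≻ c_2 ≻ ... ≻ c_m). Then r↑ is a Kemeny ranking of P if and only if at least half of the voters have ranking exactly r↑. -/
import Mathlib


open Finset

/-- A ranking over `m` candidates: `r c` is the position of candidate `c`
(position `0` = most preferred). -/
abbrev Ranking (m : ℕ) := Equiv.Perm (Fin m)

/-- Voter with ranking `r` prefers `a` to `b`. -/
def Prefers {m : ℕ} (r : Ranking m) (a b : Fin m) : Prop := r a < r b

/-- A ranking is single-peaked w.r.t. the axis `c_0 ▷ c_1 ▷ ... ▷ c_{m-1}`. -/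
def IsSinglePeaked {m : ℕ} (r : Ranking m) : Prop :=
  ∀ i j k : Fin m, i < j → j < k →
    (Prefers r i j → Prefers r j k) ∧ (Prefers r k j → Prefers r j i)

/-- A profile is single-peaked if all its rankings are. -/
def SPProfile {V : Type*} {m : ℕ} (P : V → Ranking m) : Prop :=
  ∀ v, IsSinglePeaked (P v)

/-- Popularity margin of `a` over `b`. -/
noncomputable def pop {V : Type*} [Fintype V] {m : ℕ} (P : V → Ranking m)
    (a b : Fin m) : ℤ :=
  (Nat.card {v : V // Prefers (P v) a b} : ℤ) -
    (Nat.card {v : V // Prefers (P v) b a} : ℤ)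

/-- Minimax Condorcet score of candidate `c`: worst defeat margin. -/
noncomputable def mmc {V : Type*} [Fintype V] {m : ℕ} (P : V → Ranking m)
    (c : Fin m) : WithBot ℤ :=
  (Finset.univ.erase c).sup (fun c' => ((pop P c' c : ℤ) : WithBot ℤ))

/-- Kendall's tau distance between two rankings. -/
noncomputable def kt {m : ℕ} (r s : Ranking m) : ℕ :=
  Nat.card {p : Fin m × Fin m //
    p.1 < p.2 ∧ ¬ (Prefers r p.1 p.2 ↔ Prefers s p.1 p.2)}

/-- Kemeny score of ranking `r` w.r.t. profile `P`. -/
noncomputable def ktSum {V : Type*} [Fintype V] {m : ℕ} (r : Ranking m)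
    (P : V → Ranking m) : ℕ :=
  ∑ v, kt r (P v)

/-- The peak (top candidate) of a ranking. -/
def peak {m : ℕ} (r : Ranking (m + 1)) : Fin (m + 1) := r.symm 0

open scoped Classical in
noncomputable def D {m : ℕ} (r s : Ranking m) : Finset (Fin m × Fin m) :=
  Finset.univ.filter (fun p => p.1 < p.2 ∧ ¬ (Prefers r p.1 p.2 ↔ Prefers s p.1 p.2))

open scoped Classical in
lemma kt_eq_card {m : ℕ} (r s : Ranking m) : kt r s = (D r s).card := by
  rw [kt, Nat.card_eq_fintype_card, D, Fintype.card_subtype]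

lemma mem_D {m : ℕ} {r s : Ranking m} {p : Fin m × Fin m} :
    p ∈ D r s ↔ p.1 < p.2 ∧ ¬ (Prefers r p.1 p.2 ↔ Prefers s p.1 p.2) := by
  classical
  simp [D]

lemma kt_self {m : ℕ} (r : Ranking m) : kt r r = 0 := by
  classical
  rw [kt_eq_card]
  refine Finset.card_eq_zero.2 (Finset.eq_empty_of_forall_notMem fun p hp => ?_)
  rw [mem_D] at hp; tauto

lemma kt_symm {m : ℕ} (r s : Ranking m) : kt r s = kt s r := by
  classical
  rw [kt_eq_card, kt_eq_card]
  congr 1; ext p; rw [mem_D, mem_D]; tauto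

lemma kt_triangle {m : ℕ} (r s t : Ranking m) : kt r t ≤ kt r s + kt s t := by
  classical
  rw [kt_eq_card, kt_eq_card, kt_eq_card]
  refine le_trans (Finset.card_le_card (fun p hp => ?_)) (Finset.card_union_le _ _)
  rw [mem_D] at hp
  rw [Finset.mem_union, mem_D, mem_D]
  tauto

/-- a single-peaked ranking preferring `c_0` to `c_1` is the identity -/
lemma sp_eq_refl {n : ℕ} (r : Ranking (n + 2)) (hr : IsSinglePeaked r)
    (h01 : r 0 < r 1) : r = Equiv.refl (Fin (n + 2)) := by
  have key : ∀ N : ℕ, ∀ j k : Fin (n + 2), (j : ℕ) = N → j < k → r j < r k := by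
    intro N
    induction N with
    | zero =>
      intro j k hj hjk
      have hj0 : j = 0 := by ext; simpa using hj
      subst hj0
      by_cases hk1 : k = 1
      · subst hk1; exact h01
      · have h1k : (1 : Fin (n + 2)) < k := by
          have hk0 : (k : ℕ) ≠ 0 := by
            intro h; exact absurd (Fin.ext h : k = 0) (by rintro rfl; exact lt_irrefl _ hjk)
          have hk1' : (k : ℕ) ≠ 1 := fun h => hk1 (Fin.ext (by simpa using h))
          rw [Fin.lt_def]; simp only [Fin.val_one]; omega
        have h01' : (0 : Fin (n + 2)) < 1 := by rw [Fin.lt_def]; simp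
        exact lt_trans h01 ((hr 0 1 k h01' h1k).1 h01)
    | succ N ih =>
      intro j k hj hjk
      have hNm : N < n + 2 := by omega
      have hj'j : (⟨N, hNm⟩ : Fin (n + 2)) < j := by rw [Fin.lt_def]; simp [hj]
      exact (hr ⟨N, hNm⟩ j k hj'j hjk).1 (ih ⟨N, hNm⟩ j rfl hj'j)
  have hmono : StrictMono (r : Fin (n + 2) → Fin (n + 2)) := fun j k h => key j j k rfl h
  let e : Fin (n + 2) ≃o Fin (n + 2) := StrictMono.orderIsoOfSurjective r hmono r.surjective
  refine Equiv.ext fun x => Fin.ext ?_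
  exact Fin.coe_orderIso_apply e x

/-- the swapped ranking -/
def sw (n : ℕ) : Ranking (n + 2) := Equiv.swap 0 1

lemma prefers_sw {n : ℕ} {p : Fin (n + 2) × Fin (n + 2)} (hlt : p.1 < p.2)
    (hne : p ≠ ((0 : Fin (n + 2)), (1 : Fin (n + 2)))) : Prefers (sw n) p.1 p.2 := by
  have h01 : (0 : Fin (n + 2)) < 1 := by rw [Fin.lt_def]; simp
  unfold Prefers sw
  have hp2ne0 : p.2 ≠ 0 := by
    rintro h; rw [h] at hlt; exact absurd hlt (by simp [Fin.lt_def])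
  by_cases h1 : p.1 = 0
  · have hp21 : p.2 ≠ 1 := by
      intro h; exact hne (Prod.ext h1 h)
    rw [h1, Equiv.swap_apply_left, Equiv.swap_apply_of_ne_of_ne hp2ne0 hp21]
    have e0 : (p.2 : ℕ) ≠ 0 := fun h => hp2ne0 (Fin.ext h)
    have e1 : (p.2 : ℕ) ≠ 1 := fun h => hp21 (Fin.ext (by simpa using h))
    have hv1 : ((1 : Fin (n + 2)) : ℕ) = 1 := by simp
    rw [Fin.lt_def, hv1]; omega
  · by_cases h1' : p.1 = 1
    · have hp21 : p.2 ≠ 1 := by rintro h; rw [h1', h] at hlt; exact lt_irrefl _ hlt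
      rw [h1', Equiv.swap_apply_right, Equiv.swap_apply_of_ne_of_ne hp2ne0 hp21]
      exact Fin.pos_of_ne_zero hp2ne0
    · have hp21 : p.2 ≠ 1 := by
        intro h
        rw [h] at hlt
        have h2 : (p.1 : ℕ) < 1 := by simpa [Fin.lt_def] using hlt
        exact h1 (Fin.ext (by simpa using Nat.lt_one_iff.1 h2))
      rw [Equiv.swap_apply_of_ne_of_ne h1 h1', Equiv.swap_apply_of_ne_of_ne hp2ne0 hp21]
      exact hlt

lemma D_erase {n : ℕ} (s : Ranking (n + 2)) :
    (D (Equiv.refl (Fin (n + 2))) s).erase ((0 : Fin (n + 2)), (1 : Fin (n + 2)))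
      = (D (sw n) s).erase ((0 : Fin (n + 2)), (1 : Fin (n + 2))) := by
  classical
  ext p
  simp only [Finset.mem_erase, mem_D]
  constructor
  · rintro ⟨hne, hlt, hiff⟩
    refine ⟨hne, hlt, fun h => hiff ?_⟩
    have hsw := prefers_sw hlt hne
    exact ⟨fun _ => h.1 hsw, fun _ => hlt⟩
  · rintro ⟨hne, hlt, hiff⟩
    refine ⟨hne, hlt, fun h => hiff ?_⟩
    have hsw := prefers_sw hlt hne
    exact ⟨fun _ => h.1 hlt, fun _ => hsw⟩

lemma pair_mem_D_refl {n : ℕ} (s : Ranking (n + 2)) :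
    ((0 : Fin (n + 2)), (1 : Fin (n + 2))) ∈ D (Equiv.refl (Fin (n + 2))) s ↔ s 1 < s 0 := by
  classical
  have h01 : (0 : Fin (n + 2)) < 1 := by rw [Fin.lt_def]; simp
  have hne : (0 : Fin (n + 2)) ≠ 1 := ne_of_lt h01
  rw [mem_D]
  simp only [Prefers, Equiv.refl_apply]
  constructor
  · rintro ⟨-, h⟩
    rcases lt_or_gt_of_ne (fun he : s 0 = s 1 => hne (s.injective he)) with h' | h'
    · exact absurd ⟨fun _ => h', fun _ => h01⟩ h
    · exact h'
  · intro h
    exact ⟨h01, fun hiff => absurd (hiff.1 h01) (not_lt.2 (le_of_lt h))⟩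

lemma pair_mem_D_sw {n : ℕ} (s : Ranking (n + 2)) :
    ((0 : Fin (n + 2)), (1 : Fin (n + 2))) ∈ D (sw n) s ↔ s 0 < s 1 := by
  classical
  have h01 : (0 : Fin (n + 2)) < 1 := by rw [Fin.lt_def]; simp
  rw [mem_D]
  simp only [Prefers, sw, Equiv.swap_apply_left, Equiv.swap_apply_right]
  have h10 : ¬ ((1 : Fin (n + 2)) < 0) := by simp [Fin.lt_def]
  constructor
  · rintro ⟨-, h⟩
    by_contra h'
    exact h ⟨fun h'' => absurd h'' h10, fun h'' => absurd h'' h'⟩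
  · intro h
    exact ⟨h01, fun hiff => h10 (hiff.2 h)⟩

lemma kt_refl_of_lt {n : ℕ} {s : Ranking (n + 2)} (h : s 1 < s 0) :
    kt (Equiv.refl (Fin (n + 2))) s = kt (sw n) s + 1 := by
  classical
  rw [kt_eq_card, kt_eq_card]
  have h1 : ((0 : Fin (n + 2)), (1 : Fin (n + 2))) ∈ D (Equiv.refl (Fin (n + 2))) s :=
    (pair_mem_D_refl s).2 h
  have h2 : ((0 : Fin (n + 2)), (1 : Fin (n + 2))) ∉ D (sw n) s := by
    rw [pair_mem_D_sw]; exact not_lt.2 (le_of_lt h)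
  have he := D_erase s
  rw [Finset.erase_eq_of_notMem h2] at he
  rw [← he, Finset.card_erase_of_mem h1]
  have hpos : 0 < (D (Equiv.refl (Fin (n + 2))) s).card := Finset.card_pos.2 ⟨_, h1⟩
  omega

lemma kt_sw_of_lt {n : ℕ} {s : Ranking (n + 2)} (h : s 0 < s 1) :
    kt (sw n) s = kt (Equiv.refl (Fin (n + 2))) s + 1 := by
  classical
  rw [kt_eq_card, kt_eq_card]
  have h1 : ((0 : Fin (n + 2)), (1 : Fin (n + 2))) ∈ D (sw n) s :=
    (pair_mem_D_sw s).2 h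
  have h2 : ((0 : Fin (n + 2)), (1 : Fin (n + 2))) ∉ D (Equiv.refl (Fin (n + 2))) s := by
    rw [pair_mem_D_refl]; exact not_lt.2 (le_of_lt h)
  have he := (D_erase s).symm
  rw [Finset.erase_eq_of_notMem h2] at he
  rw [← he, Finset.card_erase_of_mem h1]
  have hpos : 0 < (D (sw n) s).card := Finset.card_pos.2 ⟨_, h1⟩
  omega

lemma trivial_case {V : Type*} [Fintype V] {m : ℕ} (P : V → Ranking m)
    (hsub : ∀ r : Ranking m, r = Equiv.refl (Fin m)) :
    (∀ s : Ranking m, ktSum (Equiv.refl (Fin m)) P ≤ ktSum s P) ↔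
      Fintype.card V ≤ 2 * Nat.card {v : V // P v = Equiv.refl (Fin m)} := by
  constructor
  · intro _
    have hc : Nat.card {v : V // P v = Equiv.refl (Fin m)} = Fintype.card V := by
      rw [Nat.card_congr (Equiv.subtypeUnivEquiv (fun v => hsub (P v))),
        Nat.card_eq_fintype_card]
    omega
  · intro _ s
    rw [hsub s]

lemma main_case {V : Type*} [Fintype V] {n : ℕ} (P : V → Ranking (n + 2))
    (hsp : SPProfile P) :
    (∀ s : Ranking (n + 2), ktSum (Equiv.refl (Fin (n + 2))) P ≤ ktSum s P) ↔
      Fintype.card V ≤ 2 * Nat.card {v : V // P v = Equiv.refl (Fin (n + 2))} := by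
  classical
  set A : Finset V := Finset.univ.filter (fun v => P v = Equiv.refl (Fin (n + 2))) with hA
  have hcardA : Nat.card {v : V // P v = Equiv.refl (Fin (n + 2))} = A.card := by
    rw [Nat.card_eq_fintype_card, Fintype.card_subtype]
  have hcardV : A.card + Aᶜ.card = Fintype.card V := by
    rw [Finset.card_add_card_compl]
  have hAc : Aᶜ = Finset.univ.filter (fun v => ¬ P v = Equiv.refl (Fin (n + 2))) := by
    rw [hA, Finset.compl_filter]
  have hne01 : (0 : Fin (n + 2)) ≠ 1 := by simp [Fin.ext_iff]
  -- on Aᶜ, the voter strictly prefers c_1 to c_0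
  have hflip : ∀ v ∈ Aᶜ, P v 1 < P v 0 := by
    intro v hv
    rw [hAc, Finset.mem_filter] at hv
    rcases lt_or_gt_of_ne (fun he : P v 0 = P v 1 => hne01 ((P v).injective he))
      with h' | h'
    · exact absurd (sp_eq_refl (P v) (hsp v) h') hv.2
    · exact h'
  have hswrefl : kt (sw n) (Equiv.refl (Fin (n + 2))) = 1 := by
    have h01 : (Equiv.refl (Fin (n + 2))) 0 < (Equiv.refl (Fin (n + 2))) 1 := by
      simp [Fin.lt_def]
    rw [kt_sw_of_lt h01, kt_self]
  have hsum_refl : ktSum (Equiv.refl (Fin (n + 2))) P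
      = ∑ v ∈ Aᶜ, kt (Equiv.refl (Fin (n + 2))) (P v) := by
    rw [ktSum, ← Finset.sum_filter_add_sum_filter_not Finset.univ
      (fun v => P v = Equiv.refl (Fin (n + 2)))]
    rw [← hA, ← hAc]
    have hz : ∑ v ∈ A, kt (Equiv.refl (Fin (n + 2))) (P v) = 0 := by
      refine Finset.sum_eq_zero fun v hv => ?_
      rw [hA, Finset.mem_filter] at hv
      rw [hv.2, kt_self]
    omega
  have hsumA : ∀ s : Ranking (n + 2),
      ∑ v ∈ A, kt s (P v) = A.card * kt s (Equiv.refl (Fin (n + 2))) := by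
    intro s
    have h1 : ∀ v ∈ A, kt s (P v) = kt s (Equiv.refl (Fin (n + 2))) := fun v hv => by
      rw [hA, Finset.mem_filter] at hv; rw [hv.2]
    rw [Finset.sum_congr rfl h1, Finset.sum_const, smul_eq_mul]
  have hsplit : ∀ s : Ranking (n + 2),
      ktSum s P = ∑ v ∈ A, kt s (P v) + ∑ v ∈ Aᶜ, kt s (P v) := by
    intro s
    rw [ktSum, ← Finset.sum_filter_add_sum_filter_not Finset.univ
      (fun v => P v = Equiv.refl (Fin (n + 2))), ← hA, ← hAc]
  constructor
  · intro h
    have h1 : ktSum (Equiv.refl (Fin (n + 2))) P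
        = ∑ v ∈ Aᶜ, kt (sw n) (P v) + Aᶜ.card := by
      rw [hsum_refl]
      have hc : ∀ v ∈ Aᶜ, kt (Equiv.refl (Fin (n + 2))) (P v) = kt (sw n) (P v) + 1 :=
        fun v hv => kt_refl_of_lt (hflip v hv)
      rw [Finset.sum_congr rfl hc, Finset.sum_add_distrib, Finset.sum_const,
        smul_eq_mul, mul_one]
    have h2 : ktSum (sw n) P = A.card + ∑ v ∈ Aᶜ, kt (sw n) (P v) := by
      rw [hsplit, hsumA, hswrefl, mul_one]
    have h3 := h (sw n)
    rw [h1, h2] at h3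
    omega
  · intro h s
    have hBA : Aᶜ.card ≤ A.card := by omega
    calc ktSum (Equiv.refl (Fin (n + 2))) P
        = ∑ v ∈ Aᶜ, kt (Equiv.refl (Fin (n + 2))) (P v) := hsum_refl
      _ ≤ ∑ v ∈ Aᶜ, (kt (Equiv.refl (Fin (n + 2))) s + kt s (P v)) :=
          Finset.sum_le_sum fun v _ => kt_triangle _ _ _
      _ = Aᶜ.card * kt s (Equiv.refl (Fin (n + 2))) + ∑ v ∈ Aᶜ, kt s (P v) := by
          rw [Finset.sum_add_distrib, Finset.sum_const, smul_eq_mul, kt_symm]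
      _ ≤ A.card * kt s (Equiv.refl (Fin (n + 2))) + ∑ v ∈ Aᶜ, kt s (P v) :=
          Nat.add_le_add_right (Nat.mul_le_mul_right _ hBA) _
      _ = ∑ v ∈ A, kt s (P v) + ∑ v ∈ Aᶜ, kt s (P v) := by rw [hsumA]
      _ = ktSum s P := (hsplit s).symm

/-- in a single-peaked profile, the extreme ranking
`r↑ = c_1 ≻ ... ≻ c_m` (the identity ranking) is a Kemeny ranking iff at least
half of the voters have ranking exactly `r↑`. -/
theorem stmt_15 {V : Type*} [Fintype V] {m : ℕ} (P : V → Ranking m)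
    (hsp : SPProfile P) :
    (∀ s : Ranking m, ktSum (Equiv.refl (Fin m)) P ≤ ktSum s P) ↔
      Fintype.card V ≤ 2 * Nat.card {v : V // P v = Equiv.refl (Fin m)} := by
  obtain _ | m := m
  · exact trivial_case P (fun r => Equiv.ext fun x => x.elim0)
  obtain _ | n := m
  · exact trivial_case P (fun r => Equiv.ext fun x => Fin.ext (by omega))
  exact main_case P hsp
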